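/- arXiv:math/0404317 — 2 statements merged into one kernel-verified Lean document; each statement's English description precedes it below -/
import Mathlib

section
/- Let 𝒩 be a nest of orthogonal projections on a complex Hilbert space H and let u_1, …, u_k, v_1, …, v_k be vectors in H. Then the following are equivalent: (1) there exists X in the nest algebra Alg𝒩 with ‖X‖ ≤ 1 such that X u_i = v_i for all i; (2) for every projection N ∈ 𝒩, the k×k complex matrix (⟨N^⊥ v_i, N^⊥ v_j⟩)_{i,j} is dominated in the positive semidefinite order by the matrix (⟨N^⊥ u_i, N^⊥ u_j⟩)_{i,j}, where N^⊥ := I − N; that is, the difference (⟨N^⊥ u_i, N^⊥ u_j⟩ − ⟨N^⊥ v_i, N^⊥ v_j⟩)_{i,j} is positive semidefinite. -/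
open scoped ComplexOrder

set_option maxHeartbeats 4000000
set_option synthInstance.maxHeartbeats 1000000
set_option linter.unusedSectionVars false

noncomputable section

namespace NestInterp
open ContinuousLinearMap
variable {H : Type*} [NormedAddCommGroup H] [InnerProductSpace ℂ H] [CompleteSpace H]
local notation "⟪" x ", " y "⟫" => @inner ℂ _ _ x y

open ContinuousLinearMap
variable {H : Type*} [NormedAddCommGroup H] [InnerProductSpace ℂ H] [CompleteSpace H]

lemma sa_inner {N : H →L[ℂ] H} (hN : IsSelfAdjoint N) (x y : H) :
    ⟪N x, y⟫ = ⟪x, N y⟫ := by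
  conv_lhs => rw [← hN.adjoint_eq]
  exact adjoint_inner_left _ _ _

/-- The linear combination map. -/
def comb {k : ℕ} (a : Fin k → H) : (Fin k → ℂ) →ₗ[ℂ] H where
  toFun c := ∑ i, c i • a i
  map_add' c d := by simp [add_smul, Finset.sum_add_distrib]
  map_smul' r c := by simp [Finset.smul_sum, smul_smul]

@[simp] lemma comb_apply {k : ℕ} (a : Fin k → H) (c : Fin k → ℂ) :
    comb a c = ∑ i, c i • a i := rfl

/-- Contraction mapping `a i ↦ b i`, supported on `span (range a)`,
with range inside `span (range b)`. -/
lemma exists_contraction {k : ℕ} (a b : Fin k → H)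
    (hab : ∀ c : Fin k → ℂ, ‖∑ i, c i • b i‖ ≤ ‖∑ i, c i • a i‖) :
    ∃ d : H →L[ℂ] H, ‖d‖ ≤ 1 ∧ (∀ i, d (a i) = b i) ∧
      (∀ x, d x ∈ Submodule.span ℂ (Set.range b)) ∧
      (∀ x, (∀ i, ⟪a i, x⟫ = 0) → d x = 0) := by
  classical
  set A := comb a with hA
  set B := comb b with hB
  have hker : LinearMap.ker A ≤ LinearMap.ker B := by
    intro c hc
    rw [LinearMap.mem_ker] at hc ⊢
    have h := hab c
    rw [← comb_apply a c, ← comb_apply b c, hc] at h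
    simpa [hB] using norm_le_zero_iff.mp (by simpa using h)
  set U : Submodule ℂ H := LinearMap.range A with hU
  let e := LinearMap.quotKerEquivRange A
  let Bq : ((Fin k → ℂ) ⧸ LinearMap.ker A) →ₗ[ℂ] H := Submodule.liftQ _ B hker
  let t : U →ₗ[ℂ] H := Bq.comp e.symm.toLinearMap
  have ht : ∀ (c : Fin k → ℂ) (h : A c ∈ U), t ⟨A c, h⟩ = B c := by
    intro c h
    have h1 : e.symm ⟨A c, h⟩ = Submodule.Quotient.mk c :=
      LinearMap.quotKerEquivRange_symm_apply_image A c h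
    simp only [t, LinearMap.comp_apply, LinearEquiv.coe_toLinearMap, h1]
    exact Submodule.liftQ_apply _ B c
  haveI : FiniteDimensional ℂ U := by
    have : Module.Finite ℂ (Fin k → ℂ) := inferInstance
    exact Module.Finite.range A
  haveI : CompleteSpace U := FiniteDimensional.complete ℂ U
  let tc : U →L[ℂ] H := LinearMap.toContinuousLinearMap t
  let d : H →L[ℂ] H := tc.comp U.orthogonalProjectionOnto
  have htnorm : ∀ y : U, ‖t y‖ ≤ ‖(y : H)‖ := by
    rintro ⟨y, c, rfl⟩
    rw [ht c ⟨c, rfl⟩]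
    exact hab c
  have hdx : ∀ x, d x = t (U.orthogonalProjectionOnto x) := fun x => rfl
  refine ⟨d, ?_, ?_, ?_, ?_⟩
  · refine opNorm_le_bound d zero_le_one (fun x => ?_)
    rw [hdx, one_mul]
    calc ‖t (U.orthogonalProjectionOnto x)‖ ≤ ‖((U.orthogonalProjectionOnto x : U) : H)‖ :=
          htnorm _
      _ ≤ ‖x‖ := by
          have := U.orthogonalProjectionOnto_norm_le
          calc ‖((U.orthogonalProjectionOnto x : U) : H)‖ = ‖U.orthogonalProjectionOnto x‖ := rfl
            _ ≤ ‖(U.orthogonalProjectionOnto : H →L[ℂ] U)‖ * ‖x‖ := le_opNorm _ _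
            _ ≤ 1 * ‖x‖ := by gcongr
            _ = ‖x‖ := one_mul _
  · intro i
    have hAi : A (Pi.single i 1) = a i := by
      rw [hA, comb_apply]
      simp [Pi.single_apply, ite_smul]
    have hBi : B (Pi.single i 1) = b i := by
      rw [hB, comb_apply]
      simp [Pi.single_apply, ite_smul]
    have hai : a i ∈ U := ⟨Pi.single i 1, hAi⟩
    have h1 : U.orthogonalProjectionOnto (a i) = ⟨a i, hai⟩ :=
      Submodule.orthogonalProjectionOnto_mem_subspace_eq_self (⟨a i, hai⟩ : U)
    rw [hdx, h1]
    have h2 : (⟨a i, hai⟩ : U) = ⟨A (Pi.single i 1), LinearMap.mem_range_self A _⟩ := Subtype.ext hAi.symm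
    rw [h2, ht, hBi]
  · intro x
    rw [hdx]
    rcases (U.orthogonalProjectionOnto x : U).2 with ⟨c, hc⟩
    have : (U.orthogonalProjectionOnto x : U) = ⟨A c, LinearMap.mem_range_self A c⟩ := Subtype.ext hc.symm
    rw [this, ht, hB, comb_apply]
    exact Submodule.sum_mem _ fun i _ => Submodule.smul_mem _ _
      (Submodule.subset_span ⟨i, rfl⟩)
  · intro x hx
    have hxU : x ∈ Uᗮ := by
      intro y hy
      rcases hy with ⟨c, rfl⟩
      rw [comb_apply, sum_inner]
      refine Finset.sum_eq_zero fun i _ => ?_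
      rw [inner_smul_left, hx i, mul_zero]
    rw [hdx, Submodule.orthogonalProjectionOnto_eq_zero_iff.mpr hxU]
    simp




lemma pyth {x y : H} (h : ⟪x, y⟫ = 0) : ‖x + y‖ ^ 2 = ‖x‖ ^ 2 + ‖y‖ ^ 2 := by
  rw [norm_add_sq (𝕜 := ℂ), h]
  simp

lemma proj_norm_le {N : H →L[ℂ] H} (hsa : IsSelfAdjoint N) (hidem : N * N = N) (x : H) :
    ‖N x‖ ≤ ‖x‖ := by
  have hNN : N (N x) = N x := by
    rw [← ContinuousLinearMap.mul_apply, hidem]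
  have h1 : (‖N x‖ : ℝ) ^ 2 = RCLike.re ⟪x, N x⟫ := by
    rw [← inner_self_eq_norm_sq (𝕜 := ℂ) (N x)]
    rw [sa_inner hsa x (N x), hNN]
  have h2 : RCLike.re ⟪x, N x⟫ ≤ ‖x‖ * ‖N x‖ := re_inner_le_norm (𝕜 := ℂ) x (N x)
  nlinarith [norm_nonneg (N x), norm_nonneg x]

lemma proj_decomp {N : H →L[ℂ] H} (hsa : IsSelfAdjoint N) (hidem : N * N = N) (x : H) :
    ‖x‖ ^ 2 = ‖N x‖ ^ 2 + ‖x - N x‖ ^ 2 := by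
  have hNN : N (N x) = N x := by
    rw [← ContinuousLinearMap.mul_apply, hidem]
  have h0 : ⟪N x, x - N x⟫ = 0 := by
    rw [sa_inner hsa, map_sub, hNN, sub_self, inner_zero_right]
  calc ‖x‖ ^ 2 = ‖N x + (x - N x)‖ ^ 2 := by rw [add_sub_cancel]
    _ = ‖N x‖ ^ 2 + ‖x - N x‖ ^ 2 := pyth h0

/-- Comparability of projections from positivity of the difference. -/
lemma proj_le {N M : H →L[ℂ] H} (hNsa : IsSelfAdjoint N) (hNi : N * N = N)
    (hMsa : IsSelfAdjoint M) (hMi : M * M = M)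
    (h : (M - N).IsPositive) : M * N = N ∧ N * M = N := by
  have key : M * N = N := by
    ext x
    have hy : N (N x) = N x := by rw [← ContinuousLinearMap.mul_apply, hNi]
    set y := N x with hydef
    have h1 : 0 ≤ RCLike.re ⟪(M - N) y, y⟫ := (RCLike.nonneg_iff.mp (h.inner_nonneg_left y)).1
    have h2 : RCLike.re ⟪(M - N) y, y⟫ = RCLike.re ⟪M y, y⟫ - ‖y‖ ^ 2 := by
      have : (M - N) y = M y - N y := rfl
      rw [this, inner_sub_left, hy]
      rw [map_sub, inner_self_eq_norm_sq (𝕜 := ℂ)]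
    have hMy : M (M y) = M y := by rw [← ContinuousLinearMap.mul_apply, hMi]
    have h3 : RCLike.re ⟪M y, y⟫ = ‖M y‖ ^ 2 := by
      have e1 : ⟪M y, M y⟫ = ⟪y, M y⟫ := by rw [sa_inner hMsa y (M y), hMy]
      have e2 : RCLike.re ⟪y, M y⟫ = RCLike.re ⟪M y, y⟫ := inner_re_symm ..
      rw [← inner_self_eq_norm_sq (𝕜 := ℂ) (M y), e1, e2]
    have h4 : ‖M y‖ ≤ ‖y‖ := proj_norm_le hMsa hMi y
    have h5 : ‖M y‖ ^ 2 = ‖y‖ ^ 2 := by nlinarith [norm_nonneg (M y), norm_nonneg y]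
    have h6 : ‖M y - y‖ ^ 2 = 0 := by
      have := norm_sub_sq (𝕜 := ℂ) (M y) y
      have h7 : RCLike.re ⟪M y, y⟫ = ‖y‖ ^ 2 := by rw [h3, h5]
      rw [h7, h5] at this
      linarith
    have h8 : M y - y = 0 := by
      have h9 : ‖M y - y‖ = 0 := by nlinarith [norm_nonneg (M y - y)]
      exact norm_eq_zero.mp h9
    exact sub_eq_zero.mp h8
  refine ⟨key, ?_⟩
  have : star (M * N) = star N := by rw [key]
  rw [star_mul, hNsa.star_eq, hMsa.star_eq] at this
  exact this



/-- A finite totally preordered family of operators has a top element. -/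
lemma exists_top : ∀ F : Finset (H →L[ℂ] H),
    (∀ N ∈ F, ∀ M ∈ F, (M * N = N ∧ N * M = N) ∨ (N * M = M ∧ M * N = M)) →
    F.Nonempty →
    ∃ N ∈ F, ∀ M ∈ F, N * M = M ∧ M * N = M := by
  classical
  intro F
  induction F using Finset.induction_on with
  | empty => intro _ h; simp at h
  | @insert a s has ih =>
    intro hcomp _
    have haa : a * a = a := by
      rcases hcomp a (Finset.mem_insert_self a s) a (Finset.mem_insert_self a s) with h | h
      · exact h.1
      · exact h.1
    by_cases hs : s.Nonempty
    · obtain ⟨N, hNs, hNtop⟩ := ih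
        (fun N hN M hM => hcomp N (Finset.mem_insert_of_mem hN) M (Finset.mem_insert_of_mem hM))
        hs
      have hNN : N * N = N := (hNtop N hNs).1
      rcases hcomp a (Finset.mem_insert_self a s) N (Finset.mem_insert_of_mem hNs) with h | h
      · -- a ≤ N : N * a = a ∧ a * N = a
        refine ⟨N, Finset.mem_insert_of_mem hNs, fun M hM => ?_⟩
        rcases Finset.mem_insert.mp hM with rfl | hM
        · exact ⟨h.1, h.2⟩
        · exact hNtop M hM
      · -- N ≤ a : a * N = N ∧ N * a = N
        refine ⟨a, Finset.mem_insert_self a s, fun M hM => ?_⟩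
        rcases Finset.mem_insert.mp hM with rfl | hM
        · exact ⟨haa, haa⟩
        · -- M ≤ N ≤ a
          obtain ⟨h1, h2⟩ := hNtop M hM  -- N * M = M, M * N = M
          refine ⟨?_, ?_⟩
          · calc a * M = a * (N * M) := by rw [h1]
              _ = (a * N) * M := by rw [mul_assoc]
              _ = N * M := by rw [h.1]
              _ = M := h1
          · calc M * a = (M * N) * a := by rw [h2]
              _ = M * (N * a) := by rw [mul_assoc]
              _ = M * N := by rw [h.2]
              _ = M := h2
    · rw [Finset.not_nonempty_iff_eq_empty] at hs
      subst hs
      exact ⟨a, Finset.mem_insert_self a _, by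
        intro M hM
        rcases Finset.mem_insert.mp hM with rfl | hM
        · exact ⟨haa, haa⟩
        · simp at hM⟩

/-- An idempotent selfadjoint operator commuting with a nonneg operator commutes with its
square root. -/
lemma commute_sqrt {C Q : H →L[ℂ] H} (hC : 0 ≤ C) (hQsa : IsSelfAdjoint Q) (hQi : Q * Q = Q)
    (hQC : Q * C = C * Q) : Q * CFC.sqrt C = CFC.sqrt C * Q := by
  set W : H →L[ℂ] H := 1 - (2 : ℂ) • Q with hW
  obtain ⟨S, hS⟩ : ∃ S : H →L[ℂ] H, S = CFC.sqrt C := ⟨_, rfl⟩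
  rw [← hS]
  have hS0 : 0 ≤ S := by rw [hS]; exact CFC.sqrt_nonneg _
  have hSS : S * S = C := by rw [hS]; exact CFC.sqrt_mul_sqrt_self C hC
  have hWsa : star W = W := by
    rw [hW]
    simp [star_sub, star_smul, hQsa.star_eq]
  have hQQ : ((2:ℂ) • Q) * ((2:ℂ) • Q) = (4:ℂ) • Q := by
    rw [smul_mul_assoc, mul_smul_comm, hQi, smul_smul]
    norm_num
  have hW2 : W * W = 1 := by
    rw [hW, sub_mul, one_mul, mul_sub, mul_one, hQQ]
    module
  have hWC : W * C = C * W := by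
    rw [hW, sub_mul, mul_sub, one_mul, mul_one, smul_mul_assoc, mul_smul_comm, hQC]
  have hE : (W * S * W) * (W * S * W) = C := by
    have h1 : (W * S * W) * (W * S * W) = W * (S * ((W * W) * (S * W))) := by
      simp only [mul_assoc]
    rw [h1, hW2, one_mul, ← mul_assoc S S W, hSS, ← mul_assoc, hWC, mul_assoc, hW2, mul_one]
  have hEpos : 0 ≤ W * S * W := by
    have := star_left_conjugate_nonneg hS0 W
    rwa [hWsa] at this
  have huniq : S = W * S * W := by
    rw [hS] at hE hEpos ⊢
    exact CFC.sqrt_unique hE hEpos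
  have hWS : W * S = S * W := by
    calc W * S = W * (W * S * W) := by rw [← huniq]
      _ = (W * W) * (S * W) := by simp only [mul_assoc]
      _ = S * W := by rw [hW2, one_mul]
  have h2 : (2 : ℂ) • (Q * S) = (2 : ℂ) • (S * Q) := by
    have e1 : S - (2:ℂ) • (Q * S) = S - (2:ℂ) • (S * Q) := by
      calc S - (2:ℂ) • (Q * S) = W * S := by
            rw [hW, sub_mul, one_mul, smul_mul_assoc]
        _ = S * W := hWS
        _ = S - (2:ℂ) • (S * Q) := by rw [hW, mul_sub, mul_one, mul_smul_comm]
    exact (sub_right_inj.mp e1)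
  exact smul_right_injective _ (two_ne_zero) h2



lemma gram_sum {k : ℕ} (w : Fin k → H) (c : Fin k → ℂ) :
    ∑ i, (starRingEnd ℂ) (c i) * ∑ j, (⟪w i, w j⟫ : ℂ) * c j
      = ((‖∑ i, c i • w i‖ ^ 2 : ℝ) : ℂ) := by
  have h : ∑ i, (starRingEnd ℂ) (c i) * ∑ j, (⟪w i, w j⟫ : ℂ) * c j
      = (⟪∑ i, c i • w i, ∑ j, c j • w j⟫ : ℂ) := by
    rw [sum_inner]
    refine Finset.sum_congr rfl fun i _ => ?_
    rw [inner_smul_left, inner_sum]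
    simp only [Finset.mul_sum]
    refine Finset.sum_congr rfl fun j _ => ?_
    rw [inner_smul_right]
    ring
  rw [h, inner_self_eq_norm_sq_to_K]
  norm_cast

lemma gram_quad {k : ℕ} (a b : Fin k → H) (c : Fin k → ℂ) :
    dotProduct (star c)
        (Matrix.mulVec (Matrix.of fun i j : Fin k => (⟪a i, a j⟫ : ℂ) - (⟪b i, b j⟫ : ℂ)) c)
      = ((‖∑ i, c i • a i‖ ^ 2 : ℝ) : ℂ) - ((‖∑ i, c i • b i‖ ^ 2 : ℝ) : ℂ) := by
  rw [← gram_sum a c, ← gram_sum b c, ← Finset.sum_sub_distrib]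
  simp only [dotProduct, Matrix.mulVec, Matrix.of_apply, Pi.star_apply, RCLike.star_def]
  refine Finset.sum_congr rfl fun i _ => ?_
  rw [← mul_sub, ← Finset.sum_sub_distrib]
  refine congrArg _ (Finset.sum_congr rfl fun j _ => ?_)
  rw [sub_mul]

/-- The PSD condition is equivalent to the norm domination condition. -/
lemma psd_iff_norm {k : ℕ} (a b : Fin k → H) :
    (Matrix.of fun i j : Fin k => (⟪a i, a j⟫ : ℂ) - (⟪b i, b j⟫ : ℂ)).PosSemidef ↔
      ∀ c : Fin k → ℂ, ‖∑ i, c i • b i‖ ≤ ‖∑ i, c i • a i‖ := by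
  constructor
  · intro hpsd c
    have h := hpsd.dotProduct_mulVec_nonneg c
    rw [gram_quad, ← Complex.ofReal_sub] at h
    have h2 : (0:ℝ) ≤ ‖∑ i, c i • a i‖ ^ 2 - ‖∑ i, c i • b i‖ ^ 2 :=
      Complex.zero_le_real.mp h
    have := norm_nonneg (∑ i, c i • a i)
    have := norm_nonneg (∑ i, c i • b i)
    nlinarith
  · intro hc
    refine Matrix.PosSemidef.of_dotProduct_mulVec_nonneg ?_ ?_
    · ext i j
      simp only [Matrix.conjTranspose_apply, Matrix.of_apply, star_sub, RCLike.star_def,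
        inner_conj_symm]
    · intro c
      rw [gram_quad, ← Complex.ofReal_sub]
      have h := hc c
      have h2 : (0:ℝ) ≤ ‖∑ i, c i • a i‖ ^ 2 - ‖∑ i, c i • b i‖ ^ 2 := by
        have := norm_nonneg (∑ i, c i • b i)
        nlinarith
      exact Complex.zero_le_real.mpr h2


/-- Interpolation for a finite family of commuting projections forming a chain. -/
lemma finite_interpolation {k : ℕ} :
    ∀ (n : ℕ) (F : Finset (H →L[ℂ] H)),
      F.card = n →
      (∀ N ∈ F, IsSelfAdjoint N ∧ N * N = N) →
      (∀ N ∈ F, ∀ M ∈ F, (M * N = N ∧ N * M = N) ∨ (N * M = M ∧ M * N = M)) →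
      ∀ u v : Fin k → H,
      (∀ c : Fin k → ℂ, ‖∑ i, c i • v i‖ ≤ ‖∑ i, c i • u i‖) →
      (∀ N ∈ F, ∀ c : Fin k → ℂ,
        ‖∑ i, c i • ((1 - N) (v i))‖ ≤ ‖∑ i, c i • ((1 - N) (u i))‖) →
      ∃ X : H →L[ℂ] H, ‖X‖ ≤ 1 ∧ (∀ i, X (u i) = v i) ∧ ∀ N ∈ F, X * N = N * X * N := by
  classical
  intro n
  induction n with
  | zero =>
    intro F hcard hproj hcomp u v h0 hF
    rw [Finset.card_eq_zero] at hcard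
    subst hcard
    obtain ⟨d, hd1, hd2, -, -⟩ := exists_contraction u v h0
    exact ⟨d, hd1, hd2, by simp⟩
  | succ n ih =>
    intro F hcard hproj hcomp u v h0 hF
    have hne : F.Nonempty := by
      rw [← Finset.card_pos, hcard]
      omega
    obtain ⟨N, hNF, hNtop⟩ := exists_top F hcomp hne
    obtain ⟨hNsa, hNi⟩ := hproj N hNF
    have sub_app : ∀ (P : H →L[ℂ] H) (x : H), (1 - P) x = x - P x := fun P x => rfl
    have hNN : ∀ x, N (N x) = N x := fun x => by
      rw [← ContinuousLinearMap.mul_apply, hNi]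
    -- the corner contraction d
    obtain ⟨d, hd1, hd2, hdspan, hdkill⟩ :=
      exists_contraction (fun i => (1 - N) (u i)) (fun i => (1 - N) (v i)) (hF N hNF)
    have hdN0 : ∀ x, d (N x) = 0 := by
      intro x
      refine hdkill _ fun i => ?_
      calc ⟪(1 - N) (u i), N x⟫ = ⟪N ((1 - N) (u i)), x⟫ := (sa_inner hNsa _ x).symm
        _ = 0 := by
            rw [sub_app, map_sub, hNN, sub_self, inner_zero_left]
    have hNd0 : ∀ x, N (d x) = 0 := by
      intro x
      have hle : Submodule.span ℂ (Set.range fun i => (1 - N) (v i))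
          ≤ LinearMap.ker (N : H →ₗ[ℂ] H) := by
        rw [Submodule.span_le]
        rintro - ⟨i, rfl⟩
        rw [SetLike.mem_coe, LinearMap.mem_ker]
        show N ((1 - N) (v i)) = 0
        rw [sub_app, map_sub, hNN, sub_self]
      exact LinearMap.mem_ker.mp (hle (hdspan x))
    have hdN : d * N = 0 := by ext x; exact hdN0 x
    have hNd : N * d = 0 := by ext x; exact hNd0 x
    have hNds : N * star d = 0 := by
      have h := congrArg star hdN
      rwa [star_mul, hNsa.star_eq, star_zero] at h
    have hdx_le : ∀ x, ‖d x‖ ≤ ‖x‖ := by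
      intro x
      calc ‖d x‖ ≤ ‖d‖ * ‖x‖ := le_opNorm d x
        _ ≤ 1 * ‖x‖ := by gcongr
        _ = ‖x‖ := one_mul _
    -- the defect operator
    set C : H →L[ℂ] H := 1 - star d * d with hC
    have hCapp : ∀ x, C x = x - (star d) (d x) := fun x => rfl
    have hCsa : IsSelfAdjoint C := by
      rw [hC]
      rw [IsSelfAdjoint, star_sub, star_one, star_mul, star_star]
    have hC0 : 0 ≤ C := by
      rw [ContinuousLinearMap.nonneg_iff_isPositive]
      refine ⟨ContinuousLinearMap.isSelfAdjoint_iff_isSymmetric.mp hCsa, fun x => ?_⟩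
      have h1 : C.reApplyInnerSelf x = RCLike.re (⟪C x, x⟫ : ℂ) := rfl
      rw [h1, hCapp, inner_sub_left]
      have h2 : (⟪(star d) (d x), x⟫ : ℂ) = ⟪d x, d x⟫ := by
        rw [ContinuousLinearMap.star_eq_adjoint]
        exact adjoint_inner_left d x (d x)
      rw [h2, map_sub, inner_self_eq_norm_sq (𝕜 := ℂ), inner_self_eq_norm_sq (𝕜 := ℂ)]
      have := hdx_le x
      have := norm_nonneg (d x)
      nlinarith
    obtain ⟨S, hS⟩ : ∃ S : H →L[ℂ] H, S = CFC.sqrt C := ⟨_, rfl⟩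
    have hSsa : IsSelfAdjoint S := by
      rw [hS]
      exact IsSelfAdjoint.of_nonneg (CFC.sqrt_nonneg _)
    have hSS : S * S = C := by
      rw [hS]
      exact CFC.sqrt_mul_sqrt_self C hC0
    -- the square root norm identity
    have hSnorm : ∀ x, ‖S x‖ ^ 2 = ‖x‖ ^ 2 - ‖d x‖ ^ 2 := by
      intro x
      have h1 : (⟪S x, S x⟫ : ℂ) = ⟪x, C x⟫ := by
        rw [sa_inner hSsa x (S x)]
        congr 1
        rw [← ContinuousLinearMap.mul_apply, hSS]
      have h2 : (⟪x, (star d) (d x)⟫ : ℂ) = ⟪d x, d x⟫ := by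
        rw [ContinuousLinearMap.star_eq_adjoint]
        exact adjoint_inner_right d x (d x)
      have h3 : RCLike.re (⟪S x, S x⟫ : ℂ) = ‖S x‖ ^ 2 := inner_self_eq_norm_sq (𝕜 := ℂ) _
      rw [← h3, h1, hCapp, inner_sub_right, h2]
      rw [map_sub, inner_self_eq_norm_sq (𝕜 := ℂ), inner_self_eq_norm_sq (𝕜 := ℂ)]
    -- commutation of S with N
    have hNC : N * C = C * N := by
      rw [hC, mul_sub, sub_mul, mul_one, one_mul, ← mul_assoc, hNds, mul_assoc, hdN]
      simp
    have hSN : N * S = S * N := by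
      rw [hS]
      exact commute_sqrt hC0 hNsa hNi hNC
    have hSN0 : ∀ x, S (N x) = N (S x) := by
      intro x
      have := congrFun (congrArg (fun (T : H →L[ℂ] H) => (T : H → H)) hSN) x
      exact this.symm
    -- d on combinations of u
    have hdui : ∀ i, d (u i) = (1 - N) (v i) := by
      intro i
      have h1 : u i = N (u i) + (1 - N) (u i) := by
        rw [sub_app]
        abel
      calc d (u i) = d (N (u i) + (1 - N) (u i)) := by rw [← h1]
        _ = d (N (u i)) + d ((1 - N) (u i)) := map_add d _ _
        _ = (1 - N) (v i) := by rw [hdN0, zero_add, hd2]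
    have hdsum : ∀ c : Fin k → ℂ, d (∑ i, c i • u i) = (1 - N) (∑ i, c i • v i) := by
      intro c
      rw [map_sum, map_sum]
      exact Finset.sum_congr rfl fun i _ => by rw [map_smul, map_smul, hdui]
    -- set up the induction hypothesis data
    set F' := F.erase N with hF'
    have hcard' : F'.card = n := by
      rw [hF', Finset.card_erase_of_mem hNF, hcard]
      omega
    have hproj' : ∀ M ∈ F', IsSelfAdjoint M ∧ M * M = M :=
      fun M hM => hproj M (Finset.mem_of_mem_erase hM)
    have hcomp' : ∀ P ∈ F', ∀ M ∈ F', (M * P = P ∧ P * M = P) ∨ (P * M = M ∧ M * P = M) :=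
      fun P hP M hM => hcomp P (Finset.mem_of_mem_erase hP) M (Finset.mem_of_mem_erase hM)
    -- condition at 0 for the modified data
    have hcond0 : ∀ c : Fin k → ℂ, ‖∑ i, c i • (N (v i))‖ ≤ ‖∑ i, c i • (S (u i))‖ := by
      intro c
      set w := ∑ i, c i • u i with hw
      set z := ∑ i, c i • v i with hz
      have hdw : d w = (1 - N) z := by
        rw [hw, hz]
        exact hdsum c
      have e1 : ∑ i, c i • (N (v i)) = N z := by
        rw [hz, map_sum]
        exact Finset.sum_congr rfl fun i _ => (map_smul N (c i) (v i)).symm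
      have e2 : ∑ i, c i • (S (u i)) = S w := by
        rw [hw, map_sum]
        exact Finset.sum_congr rfl fun i _ => (map_smul S (c i) (u i)).symm
      rw [e1, e2]
      have h1 : ‖z‖ ^ 2 = ‖N z‖ ^ 2 + ‖(1 - N) z‖ ^ 2 := by
        rw [sub_app]
        exact proj_decomp hNsa hNi z
      have h2 : ‖S w‖ ^ 2 = ‖w‖ ^ 2 - ‖(1 - N) z‖ ^ 2 := by
        rw [hSnorm w, hdw]
      have h3 : ‖z‖ ≤ ‖w‖ := h0 c
      have h4 : ‖z‖ ^ 2 ≤ ‖w‖ ^ 2 := by nlinarith [norm_nonneg z, norm_nonneg w]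
      nlinarith [norm_nonneg (N z), norm_nonneg (S w)]
    -- condition at the members of F' for the modified data
    have hcondF : ∀ M ∈ F', ∀ c : Fin k → ℂ,
        ‖∑ i, c i • ((1 - M) (N (v i)))‖ ≤ ‖∑ i, c i • ((1 - M) (S (u i)))‖ := by
      intro M hM' c
      have hMF : M ∈ F := Finset.mem_of_mem_erase hM'
      obtain ⟨hMsa, hMi⟩ := hproj M hMF
      obtain ⟨hNM, hMN⟩ := hNtop M hMF
      have hMM : ∀ x, M (M x) = M x := fun x => by
        rw [← ContinuousLinearMap.mul_apply, hMi]
      have hNM0 : ∀ x, N (M x) = M x := fun x => by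
        rw [← ContinuousLinearMap.mul_apply, hNM]
      have hMN0 : ∀ x, M (N x) = M x := fun x => by
        rw [← ContinuousLinearMap.mul_apply, hMN]
      have hdM0 : ∀ x, d (M x) = 0 := fun x => by
        rw [← hNM0 x, hdN0]
      have hMd0 : ∀ x, M (d x) = 0 := fun x => by
        rw [← hMN0 (d x), hNd0, map_zero]
      have hdM : d * M = 0 := by ext x; exact hdM0 x
      have hMds : M * star d = 0 := by
        have h := congrArg star hdM
        rwa [star_mul, hMsa.star_eq, star_zero] at h
      have hMC : M * C = C * M := by
        rw [hC, mul_sub, sub_mul, mul_one, one_mul, ← mul_assoc, hMds, mul_assoc, hdM]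
        simp
      have hSM : M * S = S * M := by
        rw [hS]
        exact commute_sqrt hC0 hMsa hMi hMC
      have hSM0 : ∀ x, S (M x) = M (S x) := by
        intro x
        have := congrFun (congrArg (fun (T : H →L[ℂ] H) => (T : H → H)) hSM) x
        exact this.symm
      set w := ∑ i, c i • u i with hw
      set z := ∑ i, c i • v i with hz
      have hdw : d w = (1 - N) z := by
        rw [hw, hz]
        exact hdsum c
      have e1 : ∑ i, c i • ((1 - M) (N (v i))) = (1 - M) (N z) := by
        rw [hz, map_sum, map_sum]
        exact Finset.sum_congr rfl fun i _ => by rw [map_smul, map_smul]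
      have e2 : ∑ i, c i • ((1 - M) (S (u i))) = (1 - M) (S w) := by
        rw [hw, map_sum, map_sum]
        exact Finset.sum_congr rfl fun i _ => by rw [map_smul, map_smul]
      have e3 : ∑ i, c i • ((1 - M) (v i)) = (1 - M) z := by
        rw [hz, map_sum]
        exact Finset.sum_congr rfl fun i _ => by rw [map_smul]
      have e4 : ∑ i, c i • ((1 - M) (u i)) = (1 - M) w := by
        rw [hw, map_sum]
        exact Finset.sum_congr rfl fun i _ => by rw [map_smul]
      rw [e1, e2]
      -- LHS squared
      have hL : ‖(1 - M) z‖ ^ 2 = ‖(1 - M) (N z)‖ ^ 2 + ‖(1 - N) z‖ ^ 2 := by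
        have hp := proj_decomp hNsa hNi ((1 - M) z)
        have i1 : N ((1 - M) z) = (1 - M) (N z) := by
          simp only [sub_app, map_sub, hNM0, hMN0]
        have i2 : (1 - M) z - N ((1 - M) z) = (1 - N) z := by
          rw [i1]
          simp only [sub_app, map_sub, hMN0]
          abel
        rw [i2, i1] at hp
        exact hp
      -- RHS squared
      have hR : ‖(1 - M) (S w)‖ ^ 2 = ‖(1 - M) w‖ ^ 2 - ‖(1 - N) z‖ ^ 2 := by
        have i1 : (1 - M) (S w) = S ((1 - M) w) := by
          rw [sub_app, sub_app, map_sub, hSM0]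
        have i2 : d ((1 - M) w) = (1 - N) z := by
          rw [sub_app, map_sub, hdM0, sub_zero]
          exact hdw
        rw [i1, hSnorm, i2]
      have h3 : ‖(1 - M) z‖ ≤ ‖(1 - M) w‖ := by
        have := hF M hMF c
        rwa [e3, e4] at this
      have h4 : ‖(1 - M) z‖ ^ 2 ≤ ‖(1 - M) w‖ ^ 2 := by
        nlinarith [norm_nonneg ((1 - M) z), norm_nonneg ((1 - M) w)]
      nlinarith [norm_nonneg ((1 - M) (N z)), norm_nonneg ((1 - M) (S w))]
    -- apply the induction hypothesis
    obtain ⟨Z, hZ1, hZu, hZtri⟩ := ih F' hcard' hproj' hcomp'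
      (fun i => S (u i)) (fun i => N (v i)) hcond0 hcondF
    -- assemble the solution
    refine ⟨N * Z * S + d, ?_, ?_, ?_⟩
    · -- norm bound
      refine opNorm_le_bound _ zero_le_one fun x => ?_
      rw [one_mul]
      have happ : (N * Z * S + d) x = N (Z (S x)) + d x := rfl
      have horth : (⟪N (Z (S x)), d x⟫ : ℂ) = 0 := by
        rw [sa_inner hNsa, hNd0, inner_zero_right]
      have hpyth : ‖N (Z (S x)) + d x‖ ^ 2 = ‖N (Z (S x))‖ ^ 2 + ‖d x‖ ^ 2 := pyth horth
      have hb1 : ‖N (Z (S x))‖ ≤ ‖Z (S x)‖ := proj_norm_le hNsa hNi _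
      have hb2 : ‖Z (S x)‖ ≤ ‖S x‖ := by
        calc ‖Z (S x)‖ ≤ ‖Z‖ * ‖S x‖ := le_opNorm Z (S x)
          _ ≤ 1 * ‖S x‖ := by gcongr
          _ = ‖S x‖ := one_mul _
      have hs := hSnorm x
      rw [happ]
      have h5 : ‖N (Z (S x)) + d x‖ ^ 2 ≤ ‖x‖ ^ 2 := by
        rw [hpyth]
        nlinarith [norm_nonneg (N (Z (S x))), norm_nonneg (Z (S x)), norm_nonneg (S x)]
      nlinarith [norm_nonneg (N (Z (S x)) + d x), norm_nonneg x]
    · -- interpolation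
      intro i
      have happ : (N * Z * S + d) (u i) = N (Z (S (u i))) + d (u i) := rfl
      rw [happ, hZu i, hNN, hdui, sub_app]
      abel
    · -- triangularity
      intro M hMF2
      by_cases hMeq : M = N
      · rw [hMeq]
        ext x
        show (N * Z * S + d) (N x) = N ((N * Z * S + d) (N x))
        have happ : (N * Z * S + d) (N x) = N (Z (S (N x))) + d (N x) := rfl
        rw [happ, hdN0, add_zero, hNN]
      · have hM' : M ∈ F' := Finset.mem_erase.mpr ⟨hMeq, hMF2⟩
        obtain ⟨hMsa, hMi⟩ := hproj M hMF2
        obtain ⟨hNM, hMN⟩ := hNtop M hMF2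
        have hMM : ∀ x, M (M x) = M x := fun x => by
          rw [← ContinuousLinearMap.mul_apply, hMi]
        have hNM0 : ∀ x, N (M x) = M x := fun x => by
          rw [← ContinuousLinearMap.mul_apply, hNM]
        have hMN0 : ∀ y, M (N y) = M y := fun y => by
          rw [← ContinuousLinearMap.mul_apply, hMN]
        have hdM0 : ∀ x, d (M x) = 0 := fun x => by
          rw [← hNM0 x, hdN0]
        have hMd0 : ∀ x, M (d x) = 0 := fun x => by
          rw [← hMN0 (d x), hNd0, map_zero]
        have hdM : d * M = 0 := by ext x; exact hdM0 x
        have hMds : M * star d = 0 := by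
          have h := congrArg star hdM
          rwa [star_mul, hMsa.star_eq, star_zero] at h
        have hMC : M * C = C * M := by
          rw [hC, mul_sub, sub_mul, mul_one, one_mul, ← mul_assoc, hMds, mul_assoc, hdM]
          simp
        have hSM : M * S = S * M := by
          rw [hS]
          exact commute_sqrt hC0 hMsa hMi hMC
        have hSM0 : ∀ x, S (M x) = M (S x) := by
          intro x
          have := congrFun (congrArg (fun (T : H →L[ℂ] H) => (T : H → H)) hSM) x
          exact this.symm
        have hZM0 : ∀ y, Z (M y) = M (Z (M y)) := by
          intro y
          have := congrFun (congrArg (fun (T : H →L[ℂ] H) => (T : H → H)) (hZtri M hM')) y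
          exact this
        ext x
        have k1 : S (M x) = M (S x) := hSM0 x
        have k2 : Z (M (S x)) = M (Z (M (S x))) := hZM0 (S x)
        have lhs : (N * Z * S + d) (M x) = M (Z (M (S x))) := by
          show N (Z (S (M x))) + d (M x) = _
          rw [hdM0, add_zero, k1, k2, hNM0, hMM]
        have rhs : M ((N * Z * S + d) (M x)) = M (Z (M (S x))) := by
          show M (N (Z (S (M x))) + d (M x)) = _
          rw [hdM0, add_zero, k1, k2, hNM0, hMM]
        show (N * Z * S + d) (M x) = M ((N * Z * S + d) (M x))
        rw [rhs, lhs]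
end NestInterp

/-- **Nest algebra interpolation (vector version).** Let `𝒩` be a nest of orthogonal
projections on `H` and `u i, v i ∈ H`. There is `X` in the nest algebra `Alg 𝒩` with
`‖X‖ ≤ 1` and `X (u i) = v i` for all `i` iff for every `N ∈ 𝒩` the matrix
`(⟪N^⊥ u i, N^⊥ u j⟫ - ⟪N^⊥ v i, N^⊥ v j⟫)` is positive semidefinite, where `N^⊥ = I - N`. -/
theorem nest_algebra_vector_interpolation
    {H : Type*} [NormedAddCommGroup H] [InnerProductSpace ℂ H] [CompleteSpace H]
    (𝒩 : Set (H →L[ℂ] H))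
    (hproj : ∀ N ∈ 𝒩, IsSelfAdjoint N ∧ N * N = N)
    (hchain : ∀ N ∈ 𝒩, ∀ M ∈ 𝒩, (M - N).IsPositive ∨ (N - M).IsPositive)
    (h0 : (0 : H →L[ℂ] H) ∈ 𝒩) (h1 : (1 : H →L[ℂ] H) ∈ 𝒩)
    (hclosed : IsClosed ((fun N : H →L[ℂ] H => (N : H → H)) '' 𝒩))
    {k : ℕ} (u v : Fin k → H) :
    (∃ X : H →L[ℂ] H, (∀ N ∈ 𝒩, X * N = N * X * N) ∧ ‖X‖ ≤ 1 ∧ ∀ i, X (u i) = v i) ↔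
      ∀ N ∈ 𝒩, (Matrix.of fun i j : Fin k =>
        (inner ℂ ((1 - N) (u i)) ((1 - N) (u j)) : ℂ) -
          (inner ℂ ((1 - N) (v i)) ((1 - N) (v j)) : ℂ)).PosSemidef := by
  classical
  constructor
  · -- forward direction
    rintro ⟨X, htri, hX1, hXu⟩ N hN
    obtain ⟨hNsa, hNi⟩ := hproj N hN
    have hNsa' : IsSelfAdjoint (1 - N : H →L[ℂ] H) := (IsSelfAdjoint.one (R := H →L[ℂ] H)).sub hNsa
    have hNi' : ((1 : H →L[ℂ] H) - N) * (1 - N) = 1 - N := by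
      rw [sub_mul, one_mul, mul_sub, mul_one, hNi, sub_self, sub_zero]
    refine (NestInterp.psd_iff_norm _ _).mpr fun c => ?_
    have hkill : ∀ y : H, (1 - N) (X (N y)) = 0 := by
      intro y
      have h : X (N y) = N (X (N y)) := ContinuousLinearMap.ext_iff.mp (htri N hN) y
      show X (N y) - N (X (N y)) = 0
      rw [← h]
      exact sub_self _
    have hsplit : ∀ w : H, (1 - N) (X w) = (1 - N) (X ((1 - N) w)) := by
      intro w
      have hw : w = N w + (1 - N) w := by
        show w = N w + (w - N w)
        abel
      calc (1 - N) (X w) = (1 - N) (X (N w + (1 - N) w)) := by rw [← hw]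
        _ = (1 - N) (X (N w)) + (1 - N) (X ((1 - N) w)) := by rw [map_add, map_add]
        _ = (1 - N) (X ((1 - N) w)) := by rw [hkill, zero_add]
    have e1 : ∑ i, c i • ((1 - N) (v i)) = (1 - N) (X ((1 - N) (∑ i, c i • u i))) := by
      rw [← hsplit]
      rw [map_sum, map_sum]
      exact Finset.sum_congr rfl fun i _ => by rw [map_smul, map_smul, hXu]
    have e2 : ∑ i, c i • ((1 - N) (u i)) = (1 - N) (∑ i, c i • u i) := by
      rw [map_sum]
      exact Finset.sum_congr rfl fun i _ => by rw [map_smul]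
    rw [e1, e2]
    calc ‖(1 - N) (X ((1 - N) (∑ i, c i • u i)))‖ ≤ ‖X ((1 - N) (∑ i, c i • u i))‖ :=
          NestInterp.proj_norm_le hNsa' hNi' _
      _ ≤ ‖X‖ * ‖(1 - N) (∑ i, c i • u i)‖ := ContinuousLinearMap.le_opNorm _ _
      _ ≤ 1 * ‖(1 - N) (∑ i, c i • u i)‖ := by gcongr
      _ = ‖(1 - N) (∑ i, c i • u i)‖ := one_mul _
  · -- backward direction
    intro hcond
    have hnorm : ∀ N ∈ 𝒩, ∀ c : Fin k → ℂ,
        ‖∑ i, c i • ((1 - N) (v i))‖ ≤ ‖∑ i, c i • ((1 - N) (u i))‖ :=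
      fun N hN => (NestInterp.psd_iff_norm _ _).mp (hcond N hN)
    have hnorm0 : ∀ c : Fin k → ℂ, ‖∑ i, c i • v i‖ ≤ ‖∑ i, c i • u i‖ := by
      intro c
      have h := hnorm 0 h0 c
      simpa using h
    -- solutions over finite subnests
    have hsol : ∀ G : Finset {T : H →L[ℂ] H // T ∈ 𝒩},
        ∃ X : H →L[ℂ] H, ‖X‖ ≤ 1 ∧ (∀ i, X (u i) = v i) ∧
          ∀ P ∈ G.image Subtype.val, X * P = P * X * P := by
      intro G
      apply NestInterp.finite_interpolation (G.image Subtype.val).card _ rfl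
      · intro P hP
        obtain ⟨⟨P', hP'⟩, -, rfl⟩ := Finset.mem_image.mp hP
        exact hproj P' hP'
      · intro P hP Q hQ
        obtain ⟨⟨P', hPm⟩, -, rfl⟩ := Finset.mem_image.mp hP
        obtain ⟨⟨Q', hQm⟩, -, rfl⟩ := Finset.mem_image.mp hQ
        obtain ⟨hPsa, hPi⟩ := hproj P' hPm
        obtain ⟨hQsa, hQi⟩ := hproj Q' hQm
        rcases hchain P' hPm Q' hQm with h | h
        · exact Or.inl (NestInterp.proj_le hPsa hPi hQsa hQi h)
        · exact Or.inr (NestInterp.proj_le hQsa hQi hPsa hPi h)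
      · exact hnorm0
      · intro P hP c
        obtain ⟨⟨P', hPm⟩, -, rfl⟩ := Finset.mem_image.mp hP
        exact hnorm P' hPm c
    choose Xf hXf1 hXf2 hXf3 using hsol
    have hXfle : ∀ G (y : H), ‖Xf G y‖ ≤ ‖y‖ := by
      intro G y
      calc ‖Xf G y‖ ≤ ‖Xf G‖ * ‖y‖ := ContinuousLinearMap.le_opNorm _ _
        _ ≤ 1 * ‖y‖ := by
            have := hXf1 G
            gcongr
        _ = ‖y‖ := one_mul _
    -- an ultrafilter refining the net of finite subnests
    obtain ⟨U, hU⟩ := Filter.exists_ultrafilter_le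
      (Filter.atTop : Filter (Finset {T : H →L[ℂ] H // T ∈ 𝒩}))
    have hbound : ∀ (y x : H) (G), ‖(inner ℂ (Xf G y) x : ℂ)‖ ≤ ‖y‖ * ‖x‖ := by
      intro y x G
      calc ‖(inner ℂ (Xf G y) x : ℂ)‖ ≤ ‖Xf G y‖ * ‖x‖ := norm_inner_le_norm _ _
        _ ≤ ‖y‖ * ‖x‖ := by
            have := hXfle G y
            gcongr
    have hlim : ∀ y x : H, ∃ z : ℂ,
        Filter.Tendsto (fun G => (inner ℂ (Xf G y) x : ℂ)) U (nhds z) ∧ ‖z‖ ≤ ‖y‖ * ‖x‖ := by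
      intro y x
      have hK : IsCompact (Metric.closedBall (0 : ℂ) (‖y‖ * ‖x‖)) := isCompact_closedBall _ _
      have hmem : Metric.closedBall (0 : ℂ) (‖y‖ * ‖x‖)
          ∈ Filter.map (fun G => (inner ℂ (Xf G y) x : ℂ)) U := by
        refine Filter.mem_map.mpr (Filter.univ_mem' fun G => ?_)
        rw [Set.mem_preimage, Metric.mem_closedBall, dist_zero_right]
        exact hbound y x G
      obtain ⟨z, hz1, hz2⟩ := hK.ultrafilter_le_nhds
        (U.map fun G => (inner ℂ (Xf G y) x : ℂ))
        (by rwa [Filter.le_principal_iff, Ultrafilter.coe_map])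
      refine ⟨z, ?_, ?_⟩
      · rwa [Filter.Tendsto, ← Ultrafilter.coe_map]
      · rwa [Metric.mem_closedBall, dist_zero_right] at hz1
    choose lim hlimT hlimB using hlim
    have huniq : ∀ (y x : H) (z : ℂ),
        Filter.Tendsto (fun G => (inner ℂ (Xf G y) x : ℂ)) U (nhds z) → lim y x = z :=
      fun y x z h => tendsto_nhds_unique (hlimT y x) h
    -- the limit functional in the second variable
    have hphibound : ∀ (y x : H), ‖lim y x‖ ≤ ‖y‖ * ‖x‖ := hlimB
    let phi : H → (H →L[ℂ] ℂ) := fun y => LinearMap.mkContinuous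
      { toFun := fun x => lim y x
        map_add' := fun x x' => huniq y (x + x') _ <|
          ((hlimT y x).add (hlimT y x')).congr fun G => by
            rw [← inner_add_right]
        map_smul' := fun m x => huniq y (m • x) _ <|
          (((hlimT y x).const_mul m).congr fun G => by
            rw [← inner_smul_right]) }
      ‖y‖ (fun x => hphibound y x)
    have hphi : ∀ y x, phi y x = lim y x := fun y x => rfl
    -- the interpolating operator via Riesz representation
    let T0 : H → H := fun y => (InnerProductSpace.toDual ℂ H).symm (phi y)
    have hT0 : ∀ y x, (inner ℂ (T0 y) x : ℂ) = lim y x := fun y x =>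
      InnerProductSpace.toDual_symm_apply
    have hT0add : ∀ y y', T0 (y + y') = T0 y + T0 y' := by
      intro y y'
      refine ext_inner_right ℂ fun x => ?_
      rw [inner_add_left, hT0, hT0, hT0]
      refine huniq (y + y') x _ ?_
      refine ((hlimT y x).add (hlimT y' x)).congr fun G => ?_
      rw [map_add, inner_add_left]
    have hT0smul : ∀ (m : ℂ) (y : H), T0 (m • y) = m • T0 y := by
      intro m y
      refine ext_inner_right ℂ fun x => ?_
      rw [inner_smul_left, hT0, hT0]
      refine huniq (m • y) x _ ?_
      refine ((hlimT y x).const_mul ((starRingEnd ℂ) m)).congr fun G => ?_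
      rw [map_smul, inner_smul_left]
    have hT0norm : ∀ y, ‖T0 y‖ ≤ 1 * ‖y‖ := by
      intro y
      rw [one_mul]
      have h1 : ‖T0 y‖ ^ 2 = RCLike.re (inner ℂ (T0 y) (T0 y) : ℂ) :=
        (inner_self_eq_norm_sq (𝕜 := ℂ) _).symm
      have h2 : RCLike.re (inner ℂ (T0 y) (T0 y) : ℂ) ≤ ‖(inner ℂ (T0 y) (T0 y) : ℂ)‖ :=
        RCLike.re_le_norm _
      have h3 : ‖(inner ℂ (T0 y) (T0 y) : ℂ)‖ = ‖lim y (T0 y)‖ := by rw [hT0]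
      have h4 : ‖lim y (T0 y)‖ ≤ ‖y‖ * ‖T0 y‖ := hlimB y (T0 y)
      nlinarith [norm_nonneg (T0 y), norm_nonneg y]
    let TL : H →ₗ[ℂ] H :=
      { toFun := T0
        map_add' := hT0add
        map_smul' := hT0smul }
    let T : H →L[ℂ] H := TL.mkContinuous 1 hT0norm
    have hTapp : ∀ y x, (inner ℂ (T y) x : ℂ) = lim y x := hT0
    refine ⟨T, ?_, ?_, ?_⟩
    · -- T lies in the nest algebra
      intro N hN
      obtain ⟨hNsa, hNi⟩ := hproj N hN
      ext y
      refine ext_inner_right ℂ fun x => ?_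
      have e1 : (inner ℂ ((T * N) y) x : ℂ) = lim (N y) x := hTapp (N y) x
      have e2 : (inner ℂ ((N * T * N) y) x : ℂ) = lim (N y) (N x) := by
        have : (inner ℂ ((N * T * N) y) x : ℂ) = inner ℂ (T (N y)) (N x) :=
          NestInterp.sa_inner hNsa (T (N y)) x
        rw [this]
        exact hTapp (N y) (N x)
      rw [e1, e2]
      have hev : ∀ᶠ G in (Filter.atTop : Filter (Finset {T : H →L[ℂ] H // T ∈ 𝒩})),
          (inner ℂ (Xf G (N y)) x : ℂ) = inner ℂ (Xf G (N y)) (N x) := by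
        refine Filter.eventually_atTop.mpr ⟨{⟨N, hN⟩}, fun G hG => ?_⟩
        have hNmem : N ∈ G.image Subtype.val := by
          refine Finset.mem_image.mpr ⟨⟨N, hN⟩, ?_, rfl⟩
          exact hG (Finset.mem_singleton_self _)
        have htriG : Xf G (N y) = N (Xf G (N y)) :=
          ContinuousLinearMap.ext_iff.mp (hXf3 G N hNmem) y
        calc (inner ℂ (Xf G (N y)) x : ℂ) = inner ℂ (N (Xf G (N y))) x := by rw [← htriG]
          _ = inner ℂ (Xf G (N y)) (N x) := NestInterp.sa_inner hNsa _ x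
      have hevU : ∀ᶠ G in (U : Filter _),
          (inner ℂ (Xf G (N y)) x : ℂ) = inner ℂ (Xf G (N y)) (N x) :=
        hev.filter_mono hU
      exact huniq (N y) x _ ((hlimT (N y) (N x)).congr' (hevU.mono fun G h => h.symm))
    · exact LinearMap.mkContinuous_norm_le TL zero_le_one hT0norm
    · intro i
      refine ext_inner_right ℂ fun x => ?_
      rw [hTapp (u i) x]
      refine huniq (u i) x _ ?_
      have : (fun G => (inner ℂ (Xf G (u i)) x : ℂ)) = fun _ => (inner ℂ (v i) x : ℂ) := by
        funext G
        rw [hXf2 G i]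
      rw [this]
      exact tendsto_const_nhds
end
end

section
/- Let ℰ and H be complex Hilbert spaces and let A : ℰ → ℰ, B : H → ℰ, C : ℰ → H, D : H → H be bounded operators such that the block operator V = [[A, B], [C, D]] : ℰ ⊕ H → ℰ ⊕ H is a coisometry (V V* = I). Then for every z in the open unit disc 𝔻, the operator I − z D is invertible, the function Z(z) := A + z B (I − z D)^{-1} C is holomorphic on 𝔻, and ‖Z(z)‖ ≤ 1 for all z ∈ 𝔻. -/
open ContinuousLinearMap

/-- **Transfer functions of coisometric colligations are Schur class.** If the block operator
`V = [[A, B], [C, D]] : ℰ ⊕ H → ℰ ⊕ H` is a coisometry, then for every `z ∈ 𝔻` the operator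
`I - z D` is invertible, the transfer function `Z(z) = A + z B (I - z D)⁻¹ C` is holomorphic
on `𝔻`, and `‖Z(z)‖ ≤ 1` on `𝔻`. -/
theorem transfer_function_of_coisometry
    {E : Type*} [NormedAddCommGroup E] [InnerProductSpace ℂ E] [CompleteSpace E]
    {Hs : Type*} [NormedAddCommGroup Hs] [InnerProductSpace ℂ Hs] [CompleteSpace Hs]
    (A : E →L[ℂ] E) (B : Hs →L[ℂ] E) (C : E →L[ℂ] Hs) (D : Hs →L[ℂ] Hs)
    (V : WithLp 2 (E × Hs) →L[ℂ] WithLp 2 (E × Hs))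
    (hV : ∀ (e : E) (h : Hs),
        V ((WithLp.equiv 2 (E × Hs)).symm (e, h)) =
          (WithLp.equiv 2 (E × Hs)).symm (A e + B h, C e + D h))
    (hco : V ∘L adjoint V = 1) :
    (∀ z ∈ Metric.ball (0 : ℂ) 1, IsUnit (1 - z • D)) ∧
    DifferentiableOn ℂ
      (fun z : ℂ => A + z • (B ∘L Ring.inverse (1 - z • D) ∘L C)) (Metric.ball 0 1) ∧
    ∀ z ∈ Metric.ball (0 : ℂ) 1,
      ‖A + z • (B ∘L Ring.inverse (1 - z • D) ∘L C)‖ ≤ 1 := by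
  -- the squared-norm formula on the L² product
  have hnsq : ∀ (a : E) (b : Hs),
      ‖(WithLp.equiv 2 (E × Hs)).symm (a, b)‖ ^ 2 = ‖a‖ ^ 2 + ‖b‖ ^ 2 := by
    intro a b
    rw [WithLp.prod_norm_sq_eq_of_L2]
    simp [WithLp.toLp_fst, WithLp.toLp_snd]
  -- the adjoint of V is an isometry, hence ‖V‖ ≤ 1
  have hVst : ∀ y : WithLp 2 (E × Hs), ‖adjoint V y‖ = ‖y‖ := by
    intro y
    have h1 : (inner ℂ (adjoint V y) (adjoint V y) : ℂ) = inner ℂ y y := by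
      rw [ContinuousLinearMap.adjoint_inner_left]
      have h2 := congrArg (fun T => T y) hco
      simp only [ContinuousLinearMap.comp_apply, ContinuousLinearMap.one_apply] at h2
      rw [h2]
    have h4 : ‖adjoint V y‖ ^ 2 = ‖y‖ ^ 2 := by
      rw [← inner_self_eq_norm_sq (𝕜 := ℂ), ← inner_self_eq_norm_sq (𝕜 := ℂ), h1]
    nlinarith [norm_nonneg (adjoint V y), norm_nonneg y]
  have hVad : ‖adjoint V‖ ≤ 1 :=
    opNorm_le_bound _ zero_le_one (fun y => by rw [hVst y, one_mul])
  have hVle : ‖V‖ ≤ 1 := by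
    rw [← LinearIsometryEquiv.norm_map (ContinuousLinearMap.adjoint) V]
    exact hVad
  have hVw : ∀ w : WithLp 2 (E × Hs), ‖V w‖ ≤ ‖w‖ := by
    intro w
    calc ‖V w‖ ≤ ‖V‖ * ‖w‖ := le_opNorm V w
    _ ≤ 1 * ‖w‖ := by gcongr
    _ = ‖w‖ := one_mul _
  -- ‖D‖ ≤ 1
  have hDle : ‖D‖ ≤ 1 := by
    refine opNorm_le_bound _ zero_le_one (fun h => ?_)
    have h1 := hV 0 h
    simp only [map_zero, zero_add] at h1
    have h2 := hVw ((WithLp.equiv 2 (E × Hs)).symm (0, h))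
    rw [h1] at h2
    have h3 := pow_le_pow_left₀ (norm_nonneg _) h2 2
    rw [hnsq (B h) (D h), hnsq 0 h] at h3
    simp only [norm_zero] at h3
    have h4 : ‖D h‖ ^ 2 ≤ ‖h‖ ^ 2 := by nlinarith [sq_nonneg ‖B h‖]
    nlinarith [norm_nonneg (D h), norm_nonneg h]
  -- invertibility
  have hunit : ∀ z ∈ Metric.ball (0 : ℂ) 1, IsUnit (1 - z • D) := by
    intro z hz
    have hz1 : ‖z‖ < 1 := by simpa using mem_ball_zero_iff.mp hz
    apply isUnit_one_sub_of_norm_lt_one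
    calc ‖z • D‖ = ‖z‖ * ‖D‖ := norm_smul z D
    _ ≤ ‖z‖ * 1 := by gcongr
    _ = ‖z‖ := mul_one _
    _ < 1 := hz1
  refine ⟨hunit, ?_, ?_⟩
  · -- differentiability
    have hg : Differentiable ℂ (fun z : ℂ => (1 : Hs →L[ℂ] Hs) - z • D) :=
      (differentiable_id.smul_const D).const_sub 1
    have h1 : DifferentiableOn ℂ (fun z : ℂ => Ring.inverse ((1 : Hs →L[ℂ] Hs) - z • D))
        (Metric.ball 0 1) :=
      fun z hz => ((hg z).differentiableWithinAt).inverse (hunit z hz)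
    have h2 : DifferentiableOn ℂ
        (fun z : ℂ => B ∘L Ring.inverse ((1 : Hs →L[ℂ] Hs) - z • D) ∘L C)
        (Metric.ball 0 1) :=
      (differentiableOn_const B).clm_comp (h1.clm_comp (differentiableOn_const C))
    have h3 : DifferentiableOn ℂ
        (fun z : ℂ => z • (B ∘L Ring.inverse ((1 : Hs →L[ℂ] Hs) - z • D) ∘L C))
        (Metric.ball 0 1) := differentiableOn_id.smul h2
    exact h3.const_add A
  · -- norm bound
    intro z hz
    have hz1 : ‖z‖ < 1 := by simpa using mem_ball_zero_iff.mp hz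
    set G := Ring.inverse ((1 : Hs →L[ℂ] Hs) - z • D) with hG
    refine opNorm_le_bound _ zero_le_one (fun x => ?_)
    rw [one_mul]
    set g := G (C x) with hgdef
    have hmul : ((1 : Hs →L[ℂ] Hs) - z • D) * G = 1 :=
      Ring.mul_inverse_cancel _ (hunit z hz)
    have hge : C x + z • D g = g := by
      have h5 := congrArg (fun T => T (C x)) hmul
      simp only [ContinuousLinearMap.mul_apply, ContinuousLinearMap.sub_apply,
        ContinuousLinearMap.smul_apply, ContinuousLinearMap.one_apply] at h5
      rw [← h5]
      abel
    have hZx : (A + z • (B ∘L G ∘L C)) x = A x + z • B g := by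
      simp [ContinuousLinearMap.add_apply, ContinuousLinearMap.smul_apply,
        ContinuousLinearMap.comp_apply, hgdef]
    have hVapp : V ((WithLp.equiv 2 (E × Hs)).symm (x, z • g)) =
        (WithLp.equiv 2 (E × Hs)).symm (A x + z • B g, g) := by
      rw [hV x (z • g)]
      simp only [map_smul, hge]
    have hle := hVw ((WithLp.equiv 2 (E × Hs)).symm (x, z • g))
    rw [hVapp] at hle
    have hle2 := pow_le_pow_left₀ (norm_nonneg _) hle 2
    rw [hnsq (A x + z • B g) g, hnsq x (z • g)] at hle2
    rw [norm_smul] at hle2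
    have hkey : ‖A x + z • B g‖ ^ 2 ≤ ‖x‖ ^ 2 := by
      have hz2 : ‖z‖ ^ 2 ≤ 1 := by nlinarith [norm_nonneg z]
      have h6 : (‖z‖ * ‖g‖) ^ 2 ≤ ‖g‖ ^ 2 := by
        calc (‖z‖ * ‖g‖) ^ 2 = ‖z‖ ^ 2 * ‖g‖ ^ 2 := by ring
        _ ≤ 1 * ‖g‖ ^ 2 := mul_le_mul_of_nonneg_right hz2 (sq_nonneg _)
        _ = ‖g‖ ^ 2 := one_mul _
      linarith
    rw [hZx]
    exact (pow_le_pow_iff_left₀ (norm_nonneg _) (norm_nonneg _) two_ne_zero).mp hkey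
end
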